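/- Let L be a first-order language with no function symbols in which every relation symbol has arity 1, and let φ be an L-sentence. Let Spec := {n : ℕ | 0 < n ∧ ∃ S : L.Structure (Fin n), φ is realized in the structure S}. Then either Spec is finite, or {n : ℕ | 0 < n} \ Spec is finite. -/

import Mathlib

open FirstOrder Language

namespace MonadicSpec

variable {L : FirstOrder.Language}

/-- Relation symbols occurring in a bounded formula. -/
def relSyms : ∀ {n : ℕ}, L.BoundedFormula Empty n → Set (Σ k, L.Relations k)
  | _, .falsum => ∅
  | _, .equal _ _ => ∅
  | _, @FirstOrder.Language.BoundedFormula.rel _ _ _ _ R _ => {⟨_, R⟩}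
  | _, .imp f g => relSyms f ∪ relSyms g
  | _, .all f => relSyms f

theorem relSyms_finite : ∀ {n : ℕ} (ψ : L.BoundedFormula Empty n), (relSyms ψ).Finite
  | _, .falsum => Set.finite_empty
  | _, .equal _ _ => Set.finite_empty
  | _, .rel _ _ => Set.finite_singleton _
  | _, .imp f g => (relSyms_finite f).union (relSyms_finite g)
  | _, .all f => relSyms_finite f

/-- Quantifier depth. -/
def qd : ∀ {n : ℕ}, L.BoundedFormula Empty n → ℕ
  | _, .falsum => 0
  | _, .equal _ _ => 0
  | _, .rel _ _ => 0
  | _, .imp f g => max (qd f) (qd g)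
  | _, .all f => qd f + 1

section Struc

variable (M : Type) (N : Type) [L.Structure M] [L.Structure N]
variable (Rs : Set (Σ k, L.Relations k))

/-- Monadic "type" data of an element: truth of each relation at the constant tuple. -/
def tpo (x : M) : (Σ k, L.Relations k) → Prop := fun s => Structure.RelMap s.2 (fun _ => x)

def BF0 (A : Set (M × N)) : Prop :=
  ∀ p ∈ A, (∀ p' ∈ A, (p.1 = p'.1 ↔ p.2 = p'.2)) ∧ ∀ s ∈ Rs, (tpo M p.1 s ↔ tpo N p.2 s)

def BF : ℕ → Set (M × N) → Prop
  | 0, A => BF0 M N Rs A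
  | (q+1), A => BF0 M N Rs A ∧ (∀ x : M, ∃ y : N, BF q (insert (x,y) A)) ∧
      (∀ y : N, ∃ x : M, BF q (insert (x,y) A))

theorem BF.bf0 : ∀ {q A}, BF M N Rs q A → BF0 M N Rs A
  | 0, _, h => h
  | (q+1), _, h => h.1

theorem BF_succ_mono : ∀ (q A), BF M N Rs (q+1) A → BF M N Rs q A
  | 0, A, h => h.1
  | (q+1), A, h =>
    ⟨h.1, fun x => (h.2.1 x).imp (fun _ hy => BF_succ_mono _ _ hy),
      fun y => (h.2.2 y).imp (fun _ hx => BF_succ_mono _ _ hx)⟩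

theorem BF_mono {q q' A} (hle : q' ≤ q) (h : BF M N Rs q A) : BF M N Rs q' A := by
  induction hle with
  | refl => exact h
  | @step m hm ih => exact ih (BF_succ_mono M N Rs m A h)

theorem term_eq_var (hfun : ∀ n, IsEmpty (L.Functions n)) {β : Type*} :
    ∀ t : L.Term β, ∃ i, t = FirstOrder.Language.Term.var i
  | .var i => ⟨i, rfl⟩
  | @FirstOrder.Language.Term.func _ _ l f _ => ((hfun l).elim f)

theorem realize_iff_of_BF (hfun : ∀ n, IsEmpty (L.Functions n))
    (hrel : ∀ n, L.Relations n → n = 1) :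
    ∀ {n : ℕ} (ψ : L.BoundedFormula Empty n) (xs : Fin n → M) (ys : Fin n → N),
      relSyms ψ ⊆ Rs → BF M N Rs (qd ψ) {p | ∃ i, p = (xs i, ys i)} →
      (ψ.Realize (default : Empty → M) xs ↔ ψ.Realize (default : Empty → N) ys) := by
  intro n ψ
  induction ψ with
  | falsum => intro xs ys _ _; simp [BoundedFormula.Realize]
  | @equal n t₁ t₂ =>
    intro xs ys _ hbf
    obtain ⟨i₁, rfl⟩ := term_eq_var hfun t₁
    obtain ⟨i₂, rfl⟩ := term_eq_var hfun t₂
    rcases i₁ with e | j₁; · exact e.elim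
    rcases i₂ with e | j₂; · exact e.elim
    have h := (hbf.bf0 M N Rs (xs j₁, ys j₁) ⟨j₁, rfl⟩).1 (xs j₂, ys j₂) ⟨j₂, rfl⟩
    simpa [BoundedFormula.Realize, Term.realize] using h
  | @rel n l R ts =>
    intro xs ys hsub hbf
    have hl := hrel l R
    subst hl
    obtain ⟨i, hi⟩ := term_eq_var hfun (ts 0)
    rcases i with e | j; · exact e.elim
    have hts : ∀ k : Fin 1, ts k = ts 0 := fun k => by rw [Subsingleton.elim k 0]
    have hmem : (⟨1, R⟩ : Σ k, L.Relations k) ∈ Rs := hsub rfl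
    have h := (hbf.bf0 M N Rs (xs j, ys j) ⟨j, rfl⟩).2 _ hmem
    simp only [tpo] at h
    have e1 : (fun k => Term.realize (Sum.elim (default : Empty → M) xs) (ts k))
        = (fun _ : Fin 1 => xs j) := by
      funext k; rw [hts k, hi]; simp [Term.realize]
    have e2 : (fun k => Term.realize (Sum.elim (default : Empty → N) ys) (ts k))
        = (fun _ : Fin 1 => ys j) := by
      funext k; rw [hts k, hi]; simp [Term.realize]
    simp only [BoundedFormula.Realize, e1, e2]
    exact h
  | @imp n f g ihf ihg =>
    intro xs ys hsub hbf
    have hf := ihf xs ys (fun s hs => hsub (Or.inl hs))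
      (BF_mono M N Rs (le_max_left _ _) hbf)
    have hg := ihg xs ys (fun s hs => hsub (Or.inr hs))
      (BF_mono M N Rs (le_max_right _ _) hbf)
    simp only [BoundedFormula.Realize]
    rw [hf, hg]
  | @all n f ih =>
    intro xs ys hsub hbf
    have hset : ∀ (x : M) (y : N),
        {p | ∃ i : Fin (n+1), p = (Fin.snoc xs x i, Fin.snoc ys y i)}
          = insert (x, y) {p | ∃ i, p = (xs i, ys i)} := by
      intro x y
      ext p
      constructor
      · rintro ⟨i, rfl⟩
        refine Fin.lastCases ?_ ?_ i
        · simp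
        · intro j; right; exact ⟨j, by simp⟩
      · rintro (rfl | ⟨i, rfl⟩)
        · exact ⟨Fin.last n, by simp⟩
        · exact ⟨i.castSucc, by simp⟩
    obtain ⟨-, hforth, hback⟩ := hbf
    simp only [BoundedFormula.Realize]
    constructor
    · intro hM y
      obtain ⟨x, hx⟩ := hback y
      exact (ih (Fin.snoc xs x) (Fin.snoc ys y) hsub (by rw [hset]; exact hx)).mp (hM x)
    · intro hN x
      obtain ⟨y, hy⟩ := hforth x
      exact (ih (Fin.snoc xs x) (Fin.snoc ys y) hsub (by rw [hset]; exact hy)).mpr (hN y)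

def tpr (x : M) : ↥Rs → Prop := fun s => tpo M x s.1

def cell (t : ↥Rs → Prop) : Set M := {x | tpr M Rs x = t}

-- type-match of a pair from BF0
theorem tpr_eq_of_BF0 {A : Set (M × N)} (h : BF0 M N Rs A) {p : M × N} (hp : p ∈ A) :
    tpr M Rs p.1 = tpr N Rs p.2 := by
  funext s
  exact propext ((h p hp).2 s.1 s.2)

theorem BF0_of_tpr {x : M} {y : N} (h : tpr M Rs x = tpr N Rs y) (s : Σ k, L.Relations k)
    (hs : s ∈ Rs) : tpo M x s ↔ tpo N y s :=
  iff_of_eq (congrFun h ⟨s, hs⟩)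

variable [Finite M] [Finite N]

theorem BF_of_counts_aux (q : ℕ)
    (hc : ∀ t, (q ≤ (cell M Rs t).ncard ∧ q ≤ (cell N Rs t).ncard) ∨
      (cell M Rs t).ncard = (cell N Rs t).ncard) :
    ∀ j (A : Set (M × N)), BF0 M N Rs A → (Prod.fst '' A).ncard + j ≤ q →
      BF M N Rs j A := by
  intro j
  induction j with
  | zero => intro A h0 _; exact h0
  | succ j ih =>
    intro A h0 hcard
    refine ⟨h0, ?_, ?_⟩
    · -- forth
      intro x
      by_cases hx : ∃ p ∈ A, p.1 = x
      · obtain ⟨p, hp, rfl⟩ := hx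
        refine ⟨p.2, ?_⟩
        have : insert (p.1, p.2) A = A := Set.insert_eq_self.2 hp
        rw [this]
        exact ih A h0 (by omega)
      · -- fresh element
        push_neg at hx
        set t := tpr M Rs x with ht
        set P : Set (M × N) := {p ∈ A | tpr M Rs p.1 = t} with hP
        have hPA : P ⊆ A := fun p hp => hp.1
        have hinj1 : Set.InjOn Prod.fst P := by
          intro p hp p' hp' he
          have := ((h0 p (hPA hp)).1 p' (hPA hp')).1 he
          exact Prod.ext he this
        have hinj2 : Set.InjOn Prod.snd P := by
          intro p hp p' hp' he
          have := ((h0 p (hPA hp)).1 p' (hPA hp')).2 he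
          exact Prod.ext this he
        have hSMsub : insert x (Prod.fst '' P) ⊆ cell M Rs t := by
          rintro z (rfl | ⟨p, hp, rfl⟩)
          · exact ht.symm
          · exact hp.2
        have hSNsub : Prod.snd '' P ⊆ cell N Rs t := by
          rintro z ⟨p, hp, rfl⟩
          exact (tpr_eq_of_BF0 M N Rs h0 (hPA hp)).symm.trans hp.2
        have hxnot : x ∉ Prod.fst '' P := by
          rintro ⟨p, hp, rfl⟩; exact hx p (hPA hp) rfl
        have hcardP : (Prod.fst '' P).ncard + 1 ≤ (cell M Rs t).ncard := by
          have := Set.ncard_le_ncard hSMsub (Set.toFinite _)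
          rwa [Set.ncard_insert_of_notMem hxnot (Set.toFinite _)] at this
        have heq : (Prod.snd '' P).ncard = (Prod.fst '' P).ncard := by
          rw [Set.ncard_image_of_injOn hinj2, Set.ncard_image_of_injOn hinj1]
        have hfirstP : (Prod.fst '' P).ncard ≤ (Prod.fst '' A).ncard :=
          Set.ncard_le_ncard (Set.image_mono hPA) (Set.toFinite _)
        have hlt : (Prod.snd '' P).ncard < (cell N Rs t).ncard := by
          rcases hc t with ⟨h1, h2⟩ | he
          · omega
          · omega
        obtain ⟨y, hyc, hyP⟩ : ∃ y ∈ cell N Rs t, y ∉ Prod.snd '' P := by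
          by_contra hcon
          push_neg at hcon
          exact absurd (Set.ncard_le_ncard hcon (Set.toFinite _)) (by omega)
        have hyfresh : ∀ p ∈ A, y ≠ p.2 := by
          intro p hp hyp
          have htp2 : tpr N Rs p.2 = t := hyp ▸ hyc
          have : p ∈ P := ⟨hp, (tpr_eq_of_BF0 M N Rs h0 hp).trans htp2⟩
          exact hyP ⟨p, this, hyp.symm⟩
        refine ⟨y, ih (insert (x, y) A) ?_ ?_⟩
        · rintro p (rfl | hp)
          · constructor
            · rintro p' (rfl | hp')
              · simp
              · simp only
                constructor
                · intro he; exact absurd he.symm (hx p' hp')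
                · intro he; exact absurd he (hyfresh p' hp')
            · exact BF0_of_tpr M N Rs (ht.symm.trans hyc.symm)
          · constructor
            · rintro p' (rfl | hp')
              · simp only
                constructor
                · intro he; exact absurd he (hx p hp)
                · intro he; exact absurd he.symm (hyfresh p hp)
              · exact (h0 p hp).1 p' hp'
            · exact (h0 p hp).2
        · have : (Prod.fst '' insert (x, y) A).ncard ≤ (Prod.fst '' A).ncard + 1 := by
            rw [Set.image_insert_eq]
            exact (Set.ncard_insert_le _ _)
          omega
    · -- back (mirror)
      intro y
      by_cases hy : ∃ p ∈ A, p.2 = y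
      · obtain ⟨p, hp, rfl⟩ := hy
        refine ⟨p.1, ?_⟩
        have : insert (p.1, p.2) A = A := Set.insert_eq_self.2 hp
        rw [this]
        exact ih A h0 (by omega)
      · push_neg at hy
        set t := tpr N Rs y with ht
        set P : Set (M × N) := {p ∈ A | tpr N Rs p.2 = t} with hP
        have hPA : P ⊆ A := fun p hp => hp.1
        have hinj1 : Set.InjOn Prod.fst P := by
          intro p hp p' hp' he
          have := ((h0 p (hPA hp)).1 p' (hPA hp')).1 he
          exact Prod.ext he this
        have hinj2 : Set.InjOn Prod.snd P := by
          intro p hp p' hp' he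
          have := ((h0 p (hPA hp)).1 p' (hPA hp')).2 he
          exact Prod.ext this he
        have hSNsub : insert y (Prod.snd '' P) ⊆ cell N Rs t := by
          rintro z (rfl | ⟨p, hp, rfl⟩)
          · exact ht.symm
          · exact hp.2
        have hSMsub : Prod.fst '' P ⊆ cell M Rs t := by
          rintro z ⟨p, hp, rfl⟩
          exact (tpr_eq_of_BF0 M N Rs h0 (hPA hp)).trans hp.2
        have hynot : y ∉ Prod.snd '' P := by
          rintro ⟨p, hp, rfl⟩; exact hy p (hPA hp) rfl
        have hcardP : (Prod.snd '' P).ncard + 1 ≤ (cell N Rs t).ncard := by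
          have := Set.ncard_le_ncard hSNsub (Set.toFinite _)
          rwa [Set.ncard_insert_of_notMem hynot (Set.toFinite _)] at this
        have heq : (Prod.snd '' P).ncard = (Prod.fst '' P).ncard := by
          rw [Set.ncard_image_of_injOn hinj2, Set.ncard_image_of_injOn hinj1]
        have hfirstP : (Prod.fst '' P).ncard ≤ (Prod.fst '' A).ncard :=
          Set.ncard_le_ncard (Set.image_mono hPA) (Set.toFinite _)
        have hlt : (Prod.fst '' P).ncard < (cell M Rs t).ncard := by
          rcases hc t with ⟨h1, h2⟩ | he
          · omega
          · omega
        obtain ⟨x, hxc, hxP⟩ : ∃ x ∈ cell M Rs t, x ∉ Prod.fst '' P := by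
          by_contra hcon
          push_neg at hcon
          exact absurd (Set.ncard_le_ncard hcon (Set.toFinite _)) (by omega)
        have hxfresh : ∀ p ∈ A, x ≠ p.1 := by
          intro p hp hxp
          have htp1 : tpr M Rs p.1 = t := hxp ▸ hxc
          have : p ∈ P := ⟨hp, (tpr_eq_of_BF0 M N Rs h0 hp).symm.trans htp1⟩
          exact hxP ⟨p, this, hxp.symm⟩
        refine ⟨x, ih (insert (x, y) A) ?_ ?_⟩
        · rintro p (rfl | hp)
          · constructor
            · rintro p' (rfl | hp')
              · simp
              · simp only
                constructor
                · intro he; exact absurd he (hxfresh p' hp')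
                · intro he; exact absurd he.symm (hy p' hp')
            · exact BF0_of_tpr M N Rs (hxc.trans ht)
          · constructor
            · rintro p' (rfl | hp')
              · simp only
                constructor
                · intro he; exact absurd he.symm (hxfresh p hp)
                · intro he; exact absurd he (hy p hp)
              · exact (h0 p hp).1 p' hp'
            · exact (h0 p hp).2
        · have : (Prod.fst '' insert (x, y) A).ncard ≤ (Prod.fst '' A).ncard + 1 := by
            rw [Set.image_insert_eq]
            exact (Set.ncard_insert_le _ _)
          omega

theorem BF_of_counts (q : ℕ)
    (hc : ∀ t, (q ≤ (cell M Rs t).ncard ∧ q ≤ (cell N Rs t).ncard) ∨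
      (cell M Rs t).ncard = (cell N Rs t).ncard) :
    BF M N Rs q ∅ := by
  have := BF_of_counts_aux M N Rs q hc q ∅ (by intro p hp; exact absurd hp (Set.notMem_empty p))
  simpa using this


end Struc

section Pull

variable {M : Type} [L.Structure M]

/-- Pull back a structure along a map (no function symbols). -/
def pullback (hfun : ∀ n, IsEmpty (L.Functions n)) {β : Type} (g : β → M) : L.Structure β where
  funMap := fun {n} f _ => ((hfun n).elim f)
  RelMap := fun {n} r v => Structure.RelMap r (g ∘ v)

theorem tpr_pullback (hfun : ∀ n, IsEmpty (L.Functions n)) {β : Type} (g : β → M)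
    (Rs : Set (Σ k, L.Relations k)) (j : β) :
    @tpr L β (pullback hfun g) Rs j = tpr M Rs (g j) := rfl

theorem cell_pullback (hfun : ∀ n, IsEmpty (L.Functions n)) {β : Type} (g : β → M)
    (Rs : Set (Σ k, L.Relations k)) (t : ↥Rs → Prop) :
    @cell L β (pullback hfun g) Rs t = g ⁻¹' (cell M Rs t) := rfl

end Pull

/-- Pigeonhole: some cell is large. -/
theorem exists_big_cell {M : Type} [L.Structure M] [Finite M]
    (Rs : Set (Σ k, L.Relations k)) (hRs : Rs.Finite) (q : ℕ)
    (hn : q * Nat.card (↥Rs → Prop) + 1 ≤ Nat.card M) :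
    ∃ t, q + 1 ≤ (cell M Rs t).ncard := by
  classical
  by_contra hcon
  push_neg at hcon
  have hcount : ∀ t, (cell M Rs t).ncard ≤ q := fun t => by
    have := hcon t; omega
  haveI : Fintype M := Fintype.ofFinite M
  haveI : Fintype ↥Rs := hRs.fintype
  have key : Nat.card M ≤ q * Nat.card (↥Rs → Prop) := by
    rw [Nat.card_eq_fintype_card, Nat.card_eq_fintype_card]
    have h1 : (Finset.univ : Finset M).card =
        ∑ t : (↥Rs → Prop), (Finset.univ.filter (fun x => tpr M Rs x = t)).card :=
      Finset.card_eq_sum_card_fiberwise (fun x _ => Finset.mem_univ _)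
    have h2 : ∀ t : (↥Rs → Prop),
        (Finset.univ.filter (fun x => tpr M Rs x = t)).card ≤ q := by
      intro t
      have he : (cell M Rs t).ncard
          = (Finset.univ.filter (fun x => tpr M Rs x = t)).card := by
        rw [← Set.ncard_coe_finset]
        congr 1
        ext x
        simp [cell]
      rw [← he]
      exact hcount t
    calc Fintype.card M = _ := h1
      _ ≤ ∑ _t : (↥Rs → Prop), q := Finset.sum_le_sum (fun t _ => h2 t)
      _ = Fintype.card (↥Rs → Prop) * q := by
          rw [Finset.sum_const, Finset.card_univ, smul_eq_mul]
      _ = q * Fintype.card (↥Rs → Prop) := mul_comm _ _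
  omega

section Transfer

/-- The main transfer: matching capped cell counts gives the same truth value of φ. -/
theorem realize_transfer (hfun : ∀ n, IsEmpty (L.Functions n))
    (hrel : ∀ n, L.Relations n → n = 1) (φ : L.Sentence)
    (M N : Type) [L.Structure M] [L.Structure N] [Finite M] [Finite N]
    (hc : ∀ t, (qd φ ≤ (cell M (relSyms φ) t).ncard ∧ qd φ ≤ (cell N (relSyms φ) t).ncard) ∨
      (cell M (relSyms φ) t).ncard = (cell N (relSyms φ) t).ncard) :
    (φ.Realize M ↔ φ.Realize N) := by
  have hbf : BF M N (relSyms φ) (qd φ) ∅ := BF_of_counts M N (relSyms φ) (qd φ) hc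
  have hempty : {p : M × N | ∃ i : Fin 0, p = ((default : Fin 0 → M) i, (default : Fin 0 → N) i)}
      = ∅ := by
    ext p
    simp only [Set.mem_setOf_eq, Set.mem_empty_iff_false, iff_false]
    rintro ⟨i, -⟩
    exact i.elim0
  have := realize_iff_of_BF M N (relSyms φ) hfun hrel φ default default
    (le_refl _) (by rw [hempty]; exact hbf)
  exact this

end Transfer

section GrowShrink

/-- A model of size `n` (large enough) yields a model of size `n + 1`. -/
theorem grow (hfun : ∀ n, IsEmpty (L.Functions n)) (hrel : ∀ n, L.Relations n → n = 1)
    (φ : L.Sentence) (n : ℕ)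
    (hn : qd φ * Nat.card (↥(relSyms φ) → Prop) + 1 ≤ n)
    (h : ∃ S : L.Structure (Fin n), @Sentence.Realize L (Fin n) S φ) :
    ∃ S : L.Structure (Fin (n+1)), @Sentence.Realize L (Fin (n+1)) S φ := by
  obtain ⟨S, hS⟩ := h
  letI := S
  obtain ⟨t₀, ht₀⟩ := exists_big_cell (M := Fin n) (relSyms φ) (relSyms_finite φ) (qd φ)
    (by
      have h : Nat.card (Fin n) = n := by
        rw [Nat.card_eq_fintype_card, Fintype.card_fin]
      omega)
  have hne : (cell (Fin n) (relSyms φ) t₀).Nonempty := by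
    rw [Set.nonempty_iff_ne_empty]
    intro he
    rw [he] at ht₀
    simp at ht₀
  obtain ⟨i₀, hi₀⟩ := hne
  set g : Fin (n+1) → Fin n := Fin.snoc (fun i => i) i₀ with hg
  letI S' : L.Structure (Fin (n+1)) := pullback hfun g
  refine ⟨S', ?_⟩
  have hpre : ∀ C : Set (Fin n), i₀ ∉ C → g ⁻¹' C = Fin.castSucc '' C := by
    intro C hC
    ext j
    refine Fin.lastCases ?_ ?_ j
    · simp [hg, Fin.snoc_last, hC]
    · intro i
      simp only [Set.mem_preimage, hg, Fin.snoc_castSucc]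
      constructor
      · intro hi; exact ⟨i, hi, rfl⟩
      · rintro ⟨i', hi', he⟩
        rwa [← Fin.castSucc_injective n he]
  have hpre' : ∀ C : Set (Fin n), i₀ ∈ C →
      g ⁻¹' C = insert (Fin.last n) (Fin.castSucc '' C) := by
    intro C hC
    ext j
    refine Fin.lastCases ?_ ?_ j
    · simp [hg, Fin.snoc_last, hC]
    · intro i
      simp only [Set.mem_preimage, hg, Fin.snoc_castSucc, Set.mem_insert_iff]
      constructor
      · intro hi; exact Or.inr ⟨i, hi, rfl⟩
      · rintro (he | ⟨i', hi', he⟩)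
        · exact absurd he (Fin.castSucc_lt_last i).ne
        · rwa [← Fin.castSucc_injective n he]
  have hcc : ∀ t, @cell L (Fin (n+1)) S' (relSyms φ) t = g ⁻¹' (cell (Fin n) (relSyms φ) t) :=
    fun t => cell_pullback hfun g (relSyms φ) t
  refine (realize_transfer hfun hrel φ (Fin (n+1)) (Fin n) ?_).mpr hS
  intro t
  by_cases ht : t = t₀
  · subst ht
    left
    constructor
    · rw [hcc, hpre' _ hi₀, Set.ncard_insert_of_notMem (by
        rintro ⟨i, -, he⟩
        exact absurd he (Fin.castSucc_lt_last i).ne) (Set.toFinite _),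
        Set.ncard_image_of_injective _ (Fin.castSucc_injective n)]
      omega
    · omega
  · right
    have hnotin : i₀ ∉ cell (Fin n) (relSyms φ) t := by
      intro hmem
      exact ht (hmem.symm.trans hi₀)
    rw [hcc, hpre _ hnotin, Set.ncard_image_of_injective _ (Fin.castSucc_injective n)]

/-- A model of size `n + 1` (large enough) yields a model of size `n`. -/
theorem shrink (hfun : ∀ n, IsEmpty (L.Functions n)) (hrel : ∀ n, L.Relations n → n = 1)
    (φ : L.Sentence) (n : ℕ)
    (hn : qd φ * Nat.card (↥(relSyms φ) → Prop) + 1 ≤ n + 1)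
    (h : ∃ S : L.Structure (Fin (n+1)), @Sentence.Realize L (Fin (n+1)) S φ) :
    ∃ S : L.Structure (Fin n), @Sentence.Realize L (Fin n) S φ := by
  obtain ⟨S, hS⟩ := h
  letI := S
  obtain ⟨t₀, ht₀⟩ := exists_big_cell (M := Fin (n+1)) (relSyms φ) (relSyms_finite φ) (qd φ)
    (by
      have h : Nat.card (Fin (n+1)) = n + 1 := by
        rw [Nat.card_eq_fintype_card, Fintype.card_fin]
      omega)
  have hne : (cell (Fin (n+1)) (relSyms φ) t₀).Nonempty := by
    rw [Set.nonempty_iff_ne_empty]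
    intro he
    rw [he] at ht₀
    simp at ht₀
  obtain ⟨i₀, hi₀⟩ := hne
  set g : Fin n → Fin (n+1) := i₀.succAbove with hg
  letI S' : L.Structure (Fin n) := pullback hfun g
  refine ⟨S', ?_⟩
  have hginj : Function.Injective g := Fin.succAbove_right_injective
  have hpre : ∀ C : Set (Fin (n+1)), (g ⁻¹' C).ncard = (C \ {i₀}).ncard := by
    intro C
    rw [← Set.ncard_image_of_injective _ hginj, Set.image_preimage_eq_inter_range,
      hg, Fin.range_succAbove, ← Set.diff_eq]
  have hcc : ∀ t, @cell L (Fin n) S' (relSyms φ) t = g ⁻¹' (cell (Fin (n+1)) (relSyms φ) t) :=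
    fun t => cell_pullback hfun g (relSyms φ) t
  refine (realize_transfer hfun hrel φ (Fin n) (Fin (n+1)) ?_).mpr hS
  intro t
  by_cases ht : t = t₀
  · subst ht
    left
    constructor
    · rw [hcc, hpre, Set.ncard_diff_singleton_of_mem hi₀]
      omega
    · omega
  · right
    have hnotin : i₀ ∉ cell (Fin (n+1)) (relSyms φ) t := by
      intro hmem
      exact ht (hmem.symm.trans hi₀)
    rw [hcc, hpre, Set.diff_singleton_eq_self hnotin]

end GrowShrink

end MonadicSpec

open MonadicSpec in
theorem monadic_spectrum_finite_or_cofinite (L : FirstOrder.Language)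
    (hfun : ∀ n, IsEmpty (L.Functions n))
    (hrel : ∀ n, L.Relations n → n = 1)
    (φ : L.Sentence) :
    ({n : ℕ | 0 < n ∧ ∃ S : L.Structure (Fin n),
        @FirstOrder.Language.Sentence.Realize L (Fin n) S φ}).Finite ∨
    ({n : ℕ | 0 < n} \ {n : ℕ | 0 < n ∧ ∃ S : L.Structure (Fin n),
        @FirstOrder.Language.Sentence.Realize L (Fin n) S φ}).Finite := by
  set N₀ := qd φ * Nat.card (↥(relSyms φ) → Prop) + 1 with hN₀
  set model : ℕ → Prop := fun n => ∃ S : L.Structure (Fin n),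
    @FirstOrder.Language.Sentence.Realize L (Fin n) S φ with hmodel
  by_cases hbig : ∃ n, N₀ ≤ n ∧ model n
  · right
    obtain ⟨n₀, hn₀, hm₀⟩ := hbig
    have hup : ∀ d, model (n₀ + d) := by
      intro d
      induction d with
      | zero => exact hm₀
      | succ d ih => exact grow hfun hrel φ (n₀ + d) (by omega) ih
    have hdown : ∀ d m, N₀ ≤ m → model (m + d) → model m := by
      intro d
      induction d with
      | zero => intro m _ hm; exact hm
      | succ d ih =>
        intro m hm hmd
        exact ih m hm (shrink hfun hrel φ (m + d) (by omega) hmd)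
    have hall : ∀ m, N₀ ≤ m → model m := by
      intro m hm
      rcases le_total m n₀ with hle | hle
      · obtain ⟨d, rfl⟩ := Nat.exists_eq_add_of_le hle
        exact hdown d m hm hm₀
      · obtain ⟨d, rfl⟩ := Nat.exists_eq_add_of_le hle
        exact hup d
    apply Set.Finite.subset (Set.finite_Iio N₀)
    intro n hn
    simp only [Set.mem_diff, Set.mem_setOf_eq] at hn
    obtain ⟨hpos, hnot⟩ := hn
    by_contra hge
    simp only [Set.mem_Iio, not_lt] at hge
    exact hnot ⟨hpos, hall n hge⟩
  · left
    push_neg at hbig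
    apply Set.Finite.subset (Set.finite_Iio N₀)
    rintro n ⟨hpos, hm⟩
    simp only [Set.mem_Iio]
    by_contra hge
    push_neg at hge
    exact absurd hm (hbig n hge)
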